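/- Let ν be the Bernoulli(1/2,1/2) measure on X = {0,1}^ℕ, T the odometer map, and A = ⋃_{i=5}^{∞} ⋃_{j=0}^{i-1} T^j([0^i]). Then 5/32 ≤ ν(A) ≤ 6/32. -/

import Mathlib

open MeasureTheory Filter Topology
open scoped ENNReal

/-- The odometer map on `X = {0,1}^ℕ` (adding one with carry in binary). -/
def Tod (x : ℕ → Bool) : ℕ → Bool := fun k =>
  if ∀ i < k, x i = true then !(x k) else x k

/-- The inverse of the odometer map (subtracting one with borrow). -/
def TodInv (x : ℕ → Bool) : ℕ → Bool := fun k =>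
  if ∀ i < k, x i = false then !(x k) else x k

/-- The number determined by the first `k` binary digits of `x`. -/
def DN (k : ℕ) (x : ℕ → Bool) : ℕ := ∑ i ∈ Finset.range k, 2 ^ i * (x i).toNat

/-- The cylinder `[0^i]` of sequences starting with `i` zeros. -/
def cyl0 (i : ℕ) : Set (ℕ → Bool) := {x | ∀ j < i, x j = false}

/-- `A = ⋃_{i=5}^∞ ⋃_{j=0}^{i-1} T^j([0^i])`. -/
def Aset : Set (ℕ → Bool) := ⋃ (i : ℕ) (_ : 5 ≤ i) (j : ℕ) (_ : j < i), Tod^[j] '' cyl0 i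

/-- `A_k = ⋃_{i=5}^{k} ⋃_{j=0}^{i-1} T^j([0^i])`. -/
def Ak (k : ℕ) : Set (ℕ → Bool) :=
  ⋃ (i : ℕ) (_ : 5 ≤ i) (_ : i ≤ k) (j : ℕ) (_ : j < i), Tod^[j] '' cyl0 i

/-- `E_k = ⋃_{i=k+1}^∞ ⋃_{j=0}^{i-1} T^j([0^i])`. -/
def Ek (k : ℕ) : Set (ℕ → Bool) :=
  ⋃ (i : ℕ) (_ : k + 1 ≤ i) (j : ℕ) (_ : j < i), Tod^[j] '' cyl0 i



lemma DN_succ (n : ℕ) (x : ℕ → Bool) : DN (n+1) x = DN n x + 2^n * (x n).toNat := by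
  simp [DN, Finset.sum_range_succ]

lemma DN_lt (n : ℕ) (x : ℕ → Bool) : DN n x < 2^n := by
  induction n with
  | zero => simp [DN]
  | succ n ih =>
    rw [DN_succ]
    have h2 : (2:ℕ)^(n+1) = 2*2^n := by ring
    cases h : x n <;> simp [h] <;> omega

lemma DN_congr {n : ℕ} {x y : ℕ → Bool} (h : ∀ i < n, x i = y i) : DN n x = DN n y := by
  unfold DN
  exact Finset.sum_congr rfl fun i hi => by rw [h i (Finset.mem_range.mp hi)]

lemma DN_inj {n : ℕ} {x y : ℕ → Bool} (h : DN n x = DN n y) : ∀ i < n, x i = y i := by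
  induction n with
  | zero => omega
  | succ n ih =>
    rw [DN_succ, DN_succ] at h
    have hx := DN_lt n x
    have hy := DN_lt n y
    have hb : x n = y n ∧ DN n x = DN n y := by
      cases hxn : x n <;> cases hyn : y n <;> simp [hxn, hyn] at h ⊢ <;> omega
    intro i hi
    rcases Nat.lt_succ_iff_lt_or_eq.mp hi with h' | h'
    · exact ih hb.2 i h'
    · subst h'; exact hb.1

lemma DN_true (n : ℕ) : DN n (fun _ => true) = 2^n - 1 := by
  induction n with
  | zero => simp [DN]
  | succ n ih =>
    rw [DN_succ, ih]
    have h2 : (2:ℕ)^(n+1) = 2*2^n := by ring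
    have h1 : (1:ℕ) ≤ 2^n := Nat.one_le_two_pow
    simp only [Bool.toNat_true, mul_one]
    omega

lemma DN_all_true {n : ℕ} {x : ℕ → Bool} : DN n x = 2^n - 1 ↔ ∀ i < n, x i = true := by
  constructor
  · intro h
    have : DN n x = DN n (fun _ => true) := by rw [h, DN_true]
    intro i hi
    exact DN_inj this i hi
  · intro h
    have : DN n x = DN n (fun _ => true) := DN_congr (fun i hi => h i hi)
    rw [this, DN_true]

lemma DN_mod {m n : ℕ} (h : m ≤ n) (x : ℕ → Bool) : DN n x % 2^m = DN m x := by
  induction n with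
  | zero => have : m = 0 := by omega
            subst this; simp [DN]
  | succ n ih =>
    rcases Nat.lt_succ_iff_lt_or_eq.mp (Nat.lt_succ_of_le h) with h' | h'
    · have hm : m ≤ n := by omega
      have hd : 2^m ∣ 2^n * (x n).toNat := Dvd.dvd.mul_right (pow_dvd_pow 2 hm) _
      rw [DN_succ, Nat.add_mod, Nat.mod_eq_zero_of_dvd hd, Nat.add_zero, Nat.mod_mod_of_dvd _ dvd_rfl]
      exact ih hm
    · subst h'
      exact Nat.mod_eq_of_lt (DN_lt _ _)

lemma Tod_tail {n : ℕ} {x : ℕ → Bool} (h : ¬ ∀ i < n, x i = true) {k : ℕ} (hk : n ≤ k) :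
    Tod x k = x k := by
  unfold Tod
  rw [if_neg]
  intro hall
  exact h (fun i hi => hall i (lt_of_lt_of_le hi hk))

lemma Tod_DN (n : ℕ) (x : ℕ → Bool) : DN n (Tod x) = (DN n x + 1) % 2^n := by
  induction n with
  | zero => simp [DN]
  | succ n ih =>
    have h2 : (2:ℕ)^(n+1) = 2*2^n := by ring
    have hlt := DN_lt n x
    have h1 : (1:ℕ) ≤ 2^n := Nat.one_le_two_pow
    by_cases h : ∀ i < n, x i = true
    · have hx : DN n x = 2^n - 1 := DN_all_true.mpr h
      have hTn : Tod x n = !(x n) := by unfold Tod; rw [if_pos h]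
      rw [DN_succ, DN_succ, ih, hx, hTn, Nat.sub_add_cancel h1, Nat.mod_self]
      cases hxn : x n <;> simp only [hxn, Bool.not_true, Bool.not_false,
        Bool.toNat_true, Bool.toNat_false, mul_one, mul_zero, zero_add, add_zero]
      · rw [Nat.sub_add_cancel h1, Nat.mod_eq_of_lt (by omega)]
      · have he : 2^n - 1 + 2^n + 1 = 2^(n+1) := by omega
        rw [he, Nat.mod_self]
    · have hx : DN n x ≠ 2^n - 1 := fun hc => h (DN_all_true.mp hc)
      have hTn : Tod x n = x n := Tod_tail h (le_refl n)
      rw [DN_succ, DN_succ, ih, hTn]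
      have hsmall : (DN n x + 1) % 2^n = DN n x + 1 := Nat.mod_eq_of_lt (by omega)
      rw [hsmall]
      cases hxn : x n <;> simp only [hxn, Bool.toNat_true, Bool.toNat_false,
        mul_one, mul_zero, add_zero]
      · rw [Nat.mod_eq_of_lt (by omega)]
      · rw [Nat.mod_eq_of_lt (by omega)]; omega

lemma Tod_iter_cyl {n j : ℕ} (hj : j < 2^n) {y : ℕ → Bool} (hy : ∀ i < n, y i = false) :
    DN n (Tod^[j] y) = j ∧ ∀ k, n ≤ k → Tod^[j] y k = y k := by
  induction j with
  | zero =>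
    simp only [Function.iterate_zero, id_eq]
    constructor
    · have : DN n y = DN n (fun _ => false) := DN_congr (fun i hi => hy i hi)
      rw [this]; simp [DN]
    · intro k _; simp
  | succ j ih =>
    have hj' : j < 2^n := by omega
    obtain ⟨hDN, htail⟩ := ih hj'
    rw [Function.iterate_succ_apply']
    have hne : ¬ ∀ i < n, Tod^[j] y i = true := by
      intro hall
      have := DN_all_true.mpr hall
      omega
    constructor
    · rw [Tod_DN, hDN, Nat.mod_eq_of_lt (by omega)]
    · intro k hk
      rw [Tod_tail hne hk]
      exact htail k hk

lemma DN_exists {n j : ℕ} (hj : j < 2^n) : ∃ a : ℕ → Bool, DN n a = j := by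
  use fun i => decide ((j / 2^i) % 2 = 1)
  have key : ∀ m, DN m (fun i => decide ((j / 2^i) % 2 = 1)) = j % 2^m := by
    intro m
    induction m with
    | zero => simp [DN, Nat.mod_one]
    | succ m ih =>
      rw [DN_succ, ih]
      have h2 : (2:ℕ)^(m+1) = 2^m*2 := pow_succ 2 m
      have hmod : j % 2^(m+1) = j % 2^m + 2^m * ((j / 2^m) % 2) := by
        rw [h2, Nat.mod_mul]
      rw [hmod]
      congr 1
      have : (j / 2^m) % 2 = 0 ∨ (j / 2^m) % 2 = 1 := by omega
      rcases this with h | h <;> simp [h]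
  rw [key n, Nat.mod_eq_of_lt hj]


lemma image_eq {n j : ℕ} (hj : j < 2^n) :
    Tod^[j] '' cyl0 n = {x | DN n x = j} := by
  ext x
  constructor
  · rintro ⟨y, hy, rfl⟩
    exact (Tod_iter_cyl hj hy).1
  · intro hx
    refine ⟨fun k => if k < n then false else x k, fun i hi => if_pos hi, ?_⟩
    obtain ⟨hDN, htail⟩ :=
      Tod_iter_cyl hj (y := fun k => if k < n then false else x k) (fun i hi => if_pos hi)
    funext k
    by_cases hk : k < n
    · exact DN_inj (by rw [hDN]; exact hx.symm) k hk
    · rw [htail k (by omega)]; simp [hk]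

lemma setDN_eq {n j : ℕ} (hj : j < 2^n) :
    ∃ a : ℕ → Bool, {x : ℕ → Bool | DN n x = j} = {x | ∀ i < n, x i = a i} := by
  obtain ⟨a, ha⟩ := DN_exists hj
  refine ⟨a, ?_⟩
  ext x
  constructor
  · intro hx i hi
    exact DN_inj (hx.trans ha.symm) i hi
  · intro hx
    exact (DN_congr hx).trans ha

lemma measSet_DN {n j : ℕ} (hj : j < 2^n) :
    MeasurableSet {x : ℕ → Bool | DN n x = j} := by
  obtain ⟨a, ha⟩ := setDN_eq hj
  rw [ha]
  have he : {x : ℕ → Bool | ∀ i < n, x i = a i}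
      = ⋂ i ∈ Finset.range n, (fun x : ℕ → Bool => x i) ⁻¹' {a i} := by
    ext x; simp
  rw [he]
  exact Set.Finite.measurableSet_biInter (Finset.finite_toSet _)
    (fun i _ => (measurable_pi_apply i) (measurableSet_singleton (a i)))

/-- `5/32 ≤ ν(A) ≤ 6/32`. -/
theorem stmt3 (ν : Measure (ℕ → Bool))
    (hν : ∀ (n : ℕ) (a : ℕ → Bool), ν {x | ∀ i < n, x i = a i} = (2 : ℝ≥0∞)⁻¹ ^ n) :
    5 / 32 ≤ ν Aset ∧ ν Aset ≤ 6 / 32 := by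
  have hmeas : ∀ {n j : ℕ}, j < 2^n → ν {x : ℕ → Bool | DN n x = j} = (2 : ℝ≥0∞)⁻¹ ^ n := by
    intro n j hj
    obtain ⟨a, ha⟩ := setDN_eq hj
    rw [ha]
    exact hν n a
  constructor
  · -- lower bound
    have hsub : (⋃ j ∈ Finset.range 5, {x : ℕ → Bool | DN 5 x = j}) ⊆ Aset := by
      intro x hx
      simp only [Set.mem_iUnion, Finset.mem_range] at hx
      obtain ⟨j, hj5, hx⟩ := hx
      have hx' : x ∈ Tod^[j] '' cyl0 5 := by
        rw [image_eq (show j < 2^5 by omega)]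
        exact hx
      exact Set.mem_iUnion.mpr ⟨5, Set.mem_iUnion.mpr ⟨le_refl 5,
        Set.mem_iUnion.mpr ⟨j, Set.mem_iUnion.mpr ⟨hj5, hx'⟩⟩⟩⟩
    have hdisj : (↑(Finset.range 5) : Set ℕ).PairwiseDisjoint
        (fun j => {x : ℕ → Bool | DN 5 x = j}) := by
      intro a _ b _ hab
      refine Set.disjoint_left.mpr ?_
      intro x hxa hxb
      exact hab (hxa.symm.trans hxb)
    have hm : ∀ j ∈ Finset.range 5, MeasurableSet {x : ℕ → Bool | DN 5 x = j} := by
      intro j hj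
      exact measSet_DN (by simp at hj; omega)
    have hval : ν (⋃ j ∈ Finset.range 5, {x : ℕ → Bool | DN 5 x = j})
        = 5 * (2 : ℝ≥0∞)⁻¹ ^ 5 := by
      rw [measure_biUnion_finset hdisj hm]
      rw [Finset.sum_congr rfl (fun j hj => hmeas (show j < 2^5 by simp at hj; omega))]
      simp [Finset.sum_const]
    calc (5 : ℝ≥0∞) / 32 = 5 * (2 : ℝ≥0∞)⁻¹ ^ 5 := by
          have h32 : ((2:ℝ≥0∞)⁻¹)^5 = 32⁻¹ := by
            rw [← ENNReal.inv_pow]; norm_num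
          rw [h32, div_eq_mul_inv]
      _ = ν (⋃ j ∈ Finset.range 5, {x : ℕ → Bool | DN 5 x = j}) := hval.symm
      _ ≤ ν Aset := measure_mono hsub
  · -- upper bound
    have hsub : Aset ⊆ (⋃ j ∈ Finset.range 5, {x : ℕ → Bool | DN 5 x = j})
        ∪ ⋃ i : ℕ, {x : ℕ → Bool | DN (i+6) x = i+5} := by
      intro x hx
      simp only [Aset, Set.mem_iUnion] at hx
      obtain ⟨i, hi5, j, hji, hx⟩ := hx
      have hj2 : j < 2^i := lt_trans hji (Nat.lt_two_pow_self (n := i))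
      rw [image_eq hj2] at hx
      rw [Set.mem_setOf_eq] at hx
      by_cases hj : j < 5
      · left
        refine Set.mem_biUnion (Finset.mem_range.mpr hj) ?_
        show DN 5 x = j
        have h5 := DN_mod (show 5 ≤ i from hi5) x
        rw [hx] at h5
        rw [← h5, Nat.mod_eq_of_lt (show j < 2^5 by omega)]
      · right
        refine Set.mem_iUnion.mpr ⟨j - 5, ?_⟩
        show DN (j - 5 + 6) x = j - 5 + 5
        have he1 : j - 5 + 6 = j + 1 := by omega
        have he2 : j - 5 + 5 = j := by omega
        rw [he1, he2]
        have hmod := DN_mod (show j + 1 ≤ i from hji) x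
        rw [hx] at hmod
        have ha : j < 2^j := Nat.lt_two_pow_self (n := j)
        have hb : (2:ℕ)^(j+1) = 2*2^j := by ring
        rw [← hmod, Nat.mod_eq_of_lt (by omega)]
    have h1 : ν (⋃ j ∈ Finset.range 5, {x : ℕ → Bool | DN 5 x = j})
        ≤ 5 * (2 : ℝ≥0∞)⁻¹ ^ 5 := by
      refine le_trans (measure_biUnion_finset_le _ _) ?_
      rw [Finset.sum_congr rfl (fun j hj => hmeas (show j < 2^5 by simp at hj; omega))]
      simp [Finset.sum_const]
    have h2 : ν (⋃ i : ℕ, {x : ℕ → Bool | DN (i+6) x = i+5}) ≤ (2 : ℝ≥0∞)⁻¹ ^ 5 := by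
      refine le_trans (measure_iUnion_le _) ?_
      have heach : ∀ i : ℕ, ν {x : ℕ → Bool | DN (i+6) x = i+5} = (2 : ℝ≥0∞)⁻¹ ^ (i+6) := by
        intro i
        exact hmeas (lt_of_lt_of_le (Nat.lt_two_pow_self (n := i+5))
          (Nat.pow_le_pow_right (by norm_num) (by omega)))
      rw [tsum_congr heach]
      have : ∀ i : ℕ, (2 : ℝ≥0∞)⁻¹ ^ (i+6) = (2 : ℝ≥0∞)⁻¹ ^ i * (2 : ℝ≥0∞)⁻¹ ^ 6 :=
        fun i => pow_add _ i 6
      rw [tsum_congr this, ENNReal.tsum_mul_right, ENNReal.tsum_geometric]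
      have hsub2 : (1 : ℝ≥0∞) - 2⁻¹ = 2⁻¹ := ENNReal.one_sub_inv_two
      rw [hsub2, inv_inv, pow_succ, mul_comm, mul_assoc,
        ENNReal.inv_mul_cancel two_ne_zero ENNReal.ofNat_ne_top, mul_one]
    calc ν Aset ≤ ν (⋃ j ∈ Finset.range 5, {x : ℕ → Bool | DN 5 x = j})
          + ν (⋃ i : ℕ, {x : ℕ → Bool | DN (i+6) x = i+5}) :=
        le_trans (measure_mono hsub) (measure_union_le _ _)
      _ ≤ 5 * (2 : ℝ≥0∞)⁻¹ ^ 5 + (2 : ℝ≥0∞)⁻¹ ^ 5 := add_le_add h1 h2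
      _ = 6 / 32 := by
          have h32 : ((2:ℝ≥0∞)⁻¹)^5 = 32⁻¹ := by
            rw [← ENNReal.inv_pow]; norm_num
          rw [h32, div_eq_mul_inv, ← add_one_mul]
          norm_num
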